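/- Let k be a field and N ≥ 1. Order ℕ^N by the reversed lexicographic order: a < b if and only if at the largest index where a and b differ, the entry of a is smaller. Fix λ ∈ ℤ^N with λ_j ≥ 1 for all j. Let A be a commutative k-algebra which is free as a k-module with basis (b_m)_{m ∈ ℕ^N}, with b_0 = 1, such that for all m, n ∈ ℕ^N the element b_m·b_n − b_{m+n} lies in the k-linear span of { b_p : p < m+n and ⟨λ, p⟩ = ⟨λ, m+n⟩ }. For nonzero x ∈ A let Ψ(x) ∈ ℕ^N be the largest m whose coefficient in x is nonzero, and for n ∈ ℕ let A_n be the k-span of { b_m : ⟨λ, m⟩ = n }. Then the Newton–Okounkov body Δ(A), defined as the closure in ℝ^N of the convex hull of ⋃_{n≥1} { (1/n)·Ψ(x) : x ∈ A_n, x ≠ 0 }, equals the convex hull of the finite set { (1/λ_j)·e_j : 1 ≤ j ≤ N }, where (e_j) is the standard basis of ℝ^N. -/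

import Mathlib

/-- The (strict) reversed lexicographic order on `ℕ^N`: `a < b` iff at the largest index
where `a` and `b` differ, the entry of `a` is smaller than that of `b`. -/
def RevLex {N : ℕ} (a b : Fin N → ℕ) : Prop :=
  ∃ i : Fin N, a i < b i ∧ ∀ j : Fin N, i < j → a j = b j

/-- let `A` be a commutative `k`-algebra, free as a `k`-module with basis
`(B m)_{m ∈ ℕ^N}`, `B 0 = 1`, such that `B m · B n − B (m+n)` lies in the span of the `B p`
with `p < m+n` (reversed lex) and `⟨λ, p⟩ = ⟨λ, m+n⟩`, where `λ ∈ ℤ^N` has entries `≥ 1`.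
With `Ψ x` the largest basis index appearing in `x`, and `Aₙ` the span of the `B m` with
`⟨λ, m⟩ = n`, the Newton–Okounkov body
`Δ(A) = closure (convexHull (⋃_{n≥1} {(1/n)·Ψ(x) : x ∈ Aₙ ∖ {0}}))` equals the convex hull
of the points `(1/λⱼ)·eⱼ`. -/
theorem stmt15 {k : Type*} [Field k] {N : ℕ} (hN : 1 ≤ N)
    {A : Type*} [CommRing A] [Algebra k A]
    (lam : Fin N → ℤ) (hlam : ∀ j, 1 ≤ lam j)
    (B : Module.Basis (Fin N → ℕ) k A) (hB1 : B 0 = 1)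
    (hmul : ∀ m n : Fin N → ℕ,
      B m * B n - B (m + n) ∈
        Submodule.span k {x : A | ∃ p : Fin N → ℕ, RevLex p (m + n) ∧
          (∑ j : Fin N, lam j * (p j : ℤ)) = (∑ j : Fin N, lam j * ((m + n) j : ℤ)) ∧
          x = B p})
    (Ψ : A → (Fin N → ℕ))
    (hΨ : ∀ x : A, x ≠ 0 →
      B.repr x (Ψ x) ≠ 0 ∧ ∀ m : Fin N → ℕ, B.repr x m ≠ 0 → m = Ψ x ∨ RevLex m (Ψ x)) :
    closure (convexHull ℝ (⋃ n : ℕ, ⋃ (_ : 1 ≤ n),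
      {y : Fin N → ℝ | ∃ x : A,
        x ∈ Submodule.span k
          {z : A | ∃ m : Fin N → ℕ, (∑ j : Fin N, lam j * (m j : ℤ)) = (n : ℤ) ∧ z = B m} ∧
        x ≠ 0 ∧ y = (n : ℝ)⁻¹ • fun i : Fin N => (Ψ x i : ℝ)})) =
    convexHull ℝ
      {y : Fin N → ℝ | ∃ j : Fin N, y = ((lam j : ℝ))⁻¹ • (Pi.single j (1 : ℝ) : Fin N → ℝ)} := by
  set V : Set (Fin N → ℝ) :=
    {y : Fin N → ℝ | ∃ j : Fin N, y = ((lam j : ℝ))⁻¹ • (Pi.single j (1 : ℝ) : Fin N → ℝ)} with hV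
  set S : Set (Fin N → ℝ) := (⋃ n : ℕ, ⋃ (_ : 1 ≤ n),
      {y : Fin N → ℝ | ∃ x : A,
        x ∈ Submodule.span k
          {z : A | ∃ m : Fin N → ℕ, (∑ j : Fin N, lam j * (m j : ℤ)) = (n : ℤ) ∧ z = B m} ∧
        x ≠ 0 ∧ y = (n : ℝ)⁻¹ • fun i : Fin N => (Ψ x i : ℝ)}) with hS
  have hVfin : V.Finite := by
    have : V = Set.range (fun j : Fin N =>
        ((lam j : ℝ))⁻¹ • (Pi.single j (1 : ℝ) : Fin N → ℝ)) := by
      ext y; simp [hV, Set.range, eq_comm]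
    rw [this]; exact Set.finite_range _
  -- V ⊆ S
  have hVS : V ⊆ S := by
    rintro y ⟨j, rfl⟩
    set c : ℕ := (lam j).toNat with hc
    have hcl : (c : ℤ) = lam j := Int.toNat_of_nonneg (by linarith [hlam j])
    have hc1 : 1 ≤ c := by
      have := hlam j; omega
    set m : Fin N → ℕ := Pi.single j c with hm
    have hsum : (∑ i : Fin N, lam i * ((m i : ℕ) : ℤ)) = ((c * c : ℕ) : ℤ) := by
      rw [Finset.sum_eq_single j]
      · simp only [hm, Pi.single_eq_same, ← hcl]
        try push_cast
        try ring
      · intro b _ hb; simp [hm, Pi.single_eq_of_ne hb]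
      · simp
    have hΨm : Ψ (B m) = m := by
      obtain ⟨h1, _⟩ := hΨ (B m) (B.ne_zero m)
      rw [B.repr_self] at h1
      by_contra hne
      exact h1 (Finsupp.single_eq_of_ne fun e => hne e)
    simp only [hS, Set.mem_iUnion]
    refine ⟨c * c, Nat.one_le_iff_ne_zero.2 (by positivity), B m, ?_, B.ne_zero m, ?_⟩
    · exact Submodule.subset_span ⟨m, hsum, rfl⟩
    · funext i
      have hcR : (c : ℝ) ≠ 0 := by positivity
      have hclR : ((c : ℕ) : ℝ) = (lam j : ℝ) := by exact_mod_cast hcl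
      rcases eq_or_ne i j with rfl | hij
      · have h2 : ((c * c : ℕ) : ℝ)⁻¹ * (c : ℝ) = ((lam i : ℝ))⁻¹ := by
          rw [← hclR]; push_cast; rw [mul_inv]
          field_simp
        simp only [hΨm]
        simp only [hΨm, hm, Pi.smul_apply, Pi.single_eq_same, smul_eq_mul, mul_one]
        exact_mod_cast h2.symm
      · simp only [hΨm]
        simp [hΨm, hm, Pi.single_eq_of_ne hij]
  -- S ⊆ convexHull V
  have hScv : S ⊆ convexHull ℝ V := by
    rintro y hy
    simp only [hS, Set.mem_iUnion] at hy
    obtain ⟨n, hn, x, hxspan, hx0, rfl⟩ := hy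
    -- support of repr x is in {m | ⟨λ,m⟩ = n}
    have hsetE : {z : A | ∃ m : Fin N → ℕ, (∑ j : Fin N, lam j * (m j : ℤ)) = (n : ℤ) ∧ z = B m}
        = B '' {m : Fin N → ℕ | (∑ j : Fin N, lam j * (m j : ℤ)) = (n : ℤ)} := by
      ext z; simp [Set.mem_image, eq_comm]
    rw [hsetE, Module.Basis.mem_span_image] at hxspan
    have hΨx : (∑ j : Fin N, lam j * ((Ψ x j : ℕ) : ℤ)) = (n : ℤ) := by
      have := hxspan (Finsupp.mem_support_iff.2 (hΨ x hx0).1)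
      exact this
    have hnR : (0 : ℝ) < (n : ℝ) := by exact_mod_cast hn
    have hsumR : (∑ j : Fin N, (lam j : ℝ) * (Ψ x j : ℝ)) = (n : ℝ) := by
      exact_mod_cast hΨx
    set w : Fin N → ℝ := fun j => (lam j : ℝ) * (Ψ x j : ℝ) / n with hw
    have hw0 : ∀ j ∈ Finset.univ, (0:ℝ) ≤ w j := by
      intro j _
      have h1 : (0:ℝ) ≤ (lam j : ℝ) := by
        have : (0:ℤ) ≤ lam j := by linarith [hlam j]
        exact_mod_cast this
      positivity
    have hws : ∑ j : Fin N, w j = 1 := by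
      simp only [hw, div_eq_mul_inv, ← Finset.sum_mul, hsumR]
      field_simp
    have := Finset.centerMass_mem_convexHull (t := Finset.univ) (w := w)
      (z := fun j : Fin N => ((lam j : ℝ))⁻¹ • (Pi.single j (1 : ℝ) : Fin N → ℝ))
      hw0 (by rw [hws]; norm_num) (fun j _ => show _ ∈ V from ⟨j, rfl⟩)
    rw [Finset.centerMass_eq_of_sum_1 _ _ hws] at this
    convert this using 1
    funext i
    have hlamI : (lam i : ℝ) ≠ 0 := by
      have := hlam i; intro h; exact_mod_cast absurd h (by exact_mod_cast (by omega : lam i ≠ 0))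
    have : (∑ j : Fin N, w j • (((lam j : ℝ))⁻¹ • (Pi.single j (1 : ℝ) : Fin N → ℝ))) i
        = ∑ j : Fin N, w j * ((lam j : ℝ))⁻¹ * (Pi.single j (1 : ℝ) : Fin N → ℝ) i := by
      simp [Finset.sum_apply, mul_assoc]
    rw [this, Finset.sum_eq_single i ?_ (by simp)]
    · simp only [Pi.single_eq_same, mul_one, hw]
      field_simp
      rw [Pi.smul_apply, smul_eq_mul, ← mul_assoc, mul_one_div_cancel hnR.ne', one_mul]
    · intro b _ hb
      simp [Pi.single_eq_of_ne (Ne.symm hb)]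
  -- assemble
  apply subset_antisymm
  · have h1 : convexHull ℝ S ⊆ convexHull ℝ V :=
      convexHull_min hScv (convex_convexHull ℝ V)
    have h2 := hVfin.isClosed_convexHull (𝕜 := ℝ)
    calc closure (convexHull ℝ S) ⊆ closure (convexHull ℝ V) := closure_mono h1
      _ = convexHull ℝ V := h2.closure_eq
  · exact convexHull_min (hVS.trans ((subset_convexHull ℝ S).trans subset_closure))
      (convex_convexHull ℝ S).closure
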